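/- arXiv:1512.06044 — 2 statements merged into one kernel-verified Lean document; each statement's English description precedes it below -/
import Mathlib

section
/- Let X be a scheme whose underlying topological space is Noetherian and of finite Krull dimension. If δ and δ′ are two dimension functions on X, then the function δ − δ′ : X → ℤ is locally constant; in particular it is constant on every connected component of X, so any two dimension functions on X differ by a locally constant integer-valued function. -/
open AlgebraicGeometry

/-- `y` is an immediate specialization of `x`: `y` lies in the closure of `{x}`, `y ≠ x`,
and there is no intermediate point `z` distinct from both `x` and `y` with
`z ∈ closure {x}` and `y ∈ closure {z}`. -/
def ImmediateSpecialization {X : Type*} [TopologicalSpace X] (x y : X) : Prop :=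
  y ∈ closure ({x} : Set X) ∧ y ≠ x ∧
    ∀ z : X, z ∈ closure ({x} : Set X) → y ∈ closure ({z} : Set X) → z = x ∨ z = y

/-- A dimension function on (the underlying space of) a scheme: `δ(x) = δ(y) + 1` whenever
`y` is an immediate specialization of `x`. -/
def IsDimensionFunction {X : Type*} [TopologicalSpace X] (δ : X → ℤ) : Prop :=
  ∀ x y : X, ImmediateSpecialization x y → δ x = δ y + 1

section Aux

open TopologicalSpace Order

variable {Y : Type*} [TopologicalSpace Y]

/-- The closure of a singleton, as an irreducible closed set. -/
noncomputable def iclAux (x : Y) : IrreducibleCloseds Y :=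
  ⟨closure {x}, isIrreducible_singleton.closure, isClosed_closure⟩

lemma iclAux_coe (x : Y) : (iclAux x : Set Y) = closure {x} := rfl

/-- In a Noetherian sober space, a set stable under specialization and generization is closed. -/
lemma isClosed_of_biStable [NoetherianSpace Y] [QuasiSober Y] (S : Set Y)
    (hS : ∀ x y : Y, y ∈ closure ({x} : Set Y) → (x ∈ S ↔ y ∈ S)) : IsClosed S := by
  have hrepr : S = ⋃ Z ∈ {Z ∈ irreducibleComponents Y | Z ⊆ S}, Z := by
    ext x
    constructor
    · intro hx
      refine Set.mem_biUnion ⟨irreducibleComponent_mem_irreducibleComponents x, ?_⟩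
        mem_irreducibleComponent
      have hirr : IsIrreducible (irreducibleComponent x) := isIrreducible_irreducibleComponent
      have hcl : IsClosed (irreducibleComponent x) := isClosed_irreducibleComponent
      have hg : closure ({hirr.genericPoint} : Set Y) = irreducibleComponent x := by
        simpa [hcl.closure_eq] using hirr.isGenericPoint_genericPoint_closure
      have hη : hirr.genericPoint ∈ S := by
        have hxmem : x ∈ closure ({hirr.genericPoint} : Set Y) := by
          rw [hg]; exact mem_irreducibleComponent
        exact (hS _ x hxmem).2 hx
      intro w hw
      have hwmem : w ∈ closure ({hirr.genericPoint} : Set Y) := by rw [hg]; exact hw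
      exact (hS _ w hwmem).1 hη
    · intro hx
      obtain ⟨Z, hZ, hxZ⟩ := Set.mem_iUnion₂.1 hx
      exact hZ.2 hxZ
  rw [hrepr]
  refine Set.Finite.isClosed_biUnion
    (NoetherianSpace.finite_irreducibleComponents.subset (Set.sep_subset _ _)) ?_
  intro Z hZ
  exact isClosed_of_mem_irreducibleComponents Z hZ.1

/-- In a Noetherian sober space, a set stable under specialization and generization is open. -/
lemma isOpen_of_biStable [NoetherianSpace Y] [QuasiSober Y] (S : Set Y)
    (hS : ∀ x y : Y, y ∈ closure ({x} : Set Y) → (x ∈ S ↔ y ∈ S)) : IsOpen S := by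
  rw [← isClosed_compl_iff]
  exact isClosed_of_biStable Sᶜ fun x y h => not_congr (hS x y h)

/-- The difference of two dimension functions is constant along specializations. -/
lemma sub_eq_of_mem_closure [NoetherianSpace Y] [QuasiSober Y] [T0Space Y]
    (hfd : topologicalKrullDim Y < ⊤)
    (δ δ' : Y → ℤ) (hδ : IsDimensionFunction δ) (hδ' : IsDimensionFunction δ')
    (x y : Y) (hy : y ∈ closure ({x} : Set Y)) : δ x - δ' x = δ y - δ' y := by
  have hfin : ∀ w : Y, Order.coheight (iclAux w) < ⊤ := fun w =>
    WithBot.coe_lt_coe.mp (lt_of_le_of_lt (Order.coheight_le_krullDim (iclAux w)) hfd)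
  have key : ∀ n : ℕ∞, ∀ x y : Y, Order.coheight (iclAux y) = n →
      y ∈ closure ({x} : Set Y) → δ x - δ' x = δ y - δ' y := by
    intro n
    induction n using WellFoundedLT.induction with
    | _ n IH =>
      intro x y hn hy
      rcases eq_or_ne y x with rfl | hne
      · rfl
      -- find a point `z` whose closure is minimal among intermediate points distinct from `y`
      obtain ⟨C, ⟨z, hCz, hzx, hzy, hyz⟩, hmin⟩ :=
        (wellFounded_lt (α := Closeds Y)).has_min
          {C : Closeds Y | ∃ z : Y, (C : Set Y) = closure {z} ∧ z ∈ closure ({x} : Set Y) ∧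
            z ≠ y ∧ y ∈ closure ({z} : Set Y)}
          ⟨⟨closure {x}, isClosed_closure⟩, x, rfl, subset_closure rfl, hne.symm, hy⟩
      have himm : ImmediateSpecialization z y := by
        refine ⟨hyz, hzy.symm, ?_⟩
        intro w hwz hyw
        by_cases hwy : w = y
        · exact Or.inr hwy
        left
        have hzsub : closure ({z} : Set Y) ⊆ closure ({x} : Set Y) :=
          closure_minimal (Set.singleton_subset_iff.2 hzx) isClosed_closure
        have hwsub : closure ({w} : Set Y) ⊆ closure ({z} : Set Y) :=
          closure_minimal (Set.singleton_subset_iff.2 hwz) isClosed_closure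
        set Cw : Closeds Y := ⟨closure {w}, isClosed_closure⟩ with hCwdef
        have hCwmem : Cw ∈ {C : Closeds Y | ∃ z : Y, (C : Set Y) = closure {z} ∧
            z ∈ closure ({x} : Set Y) ∧ z ≠ y ∧ y ∈ closure ({z} : Set Y)} :=
          ⟨w, rfl, hzsub hwz, hwy, hyw⟩
        have hnlt := hmin Cw hCwmem
        have hle : Cw ≤ C := by
          rw [← SetLike.coe_subset_coe, hCz]
          exact hwsub
        have heqC : Cw = C := by
          rcases lt_or_eq_of_le hle with h | h
          · exact absurd h hnlt
          · exact h
        have hclos : closure ({w} : Set Y) = closure ({z} : Set Y) := by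
          have : (Cw : Set Y) = (C : Set Y) := by rw [heqC]
          rw [hCz] at this
          exact this
        exact (inseparable_iff_closure_eq.mpr hclos).eq
      have hstep : δ z - δ' z = δ y - δ' y := by
        have h1 := hδ z y himm
        have h2 := hδ' z y himm
        omega
      rcases eq_or_ne z x with rfl | hzx'
      · exact hstep
      have hlt : iclAux y < iclAux z := by
        refine lt_of_le_of_ne ?_ ?_
        · rw [← SetLike.coe_subset_coe, iclAux_coe, iclAux_coe]
          exact closure_minimal (Set.singleton_subset_iff.2 hyz) isClosed_closure
        · intro h
          apply hzy
          have : closure ({y} : Set Y) = closure ({z} : Set Y) := by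
            have := congrArg (fun C : TopologicalSpace.IrreducibleCloseds Y => (C : Set Y)) h
            simpa [iclAux_coe] using this
          exact ((inseparable_iff_closure_eq.mpr this).eq).symm
      have hco : Order.coheight (iclAux z) < n := by
        rw [← hn]
        exact Order.coheight_strictAnti hlt (hfin z)
      exact (IH _ hco x z rfl hzx).trans hstep
  exact key _ x y rfl hy

end Aux

/-- If `δ` and `δ'` are two dimension functions on a scheme `X` whose underlying space is
Noetherian and of finite Krull dimension, then `δ - δ'` is locally constant; in particular
it is constant on every connected component of `X`. -/
theorem dimensionFunction_sub_isLocallyConstant (X : Scheme)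
    [TopologicalSpace.NoetherianSpace X] (hfd : topologicalKrullDim X < ⊤)
    (δ δ' : X → ℤ) (hδ : IsDimensionFunction δ) (hδ' : IsDimensionFunction δ') :
    IsLocallyConstant (fun x : X => δ x - δ' x) ∧
      ∀ x y : X, y ∈ connectedComponent x → δ x - δ' x = δ y - δ' y := by
  have hspec : ∀ x y : X, y ∈ closure ({x} : Set X) → δ x - δ' x = δ y - δ' y :=
    sub_eq_of_mem_closure hfd δ δ' hδ hδ'
  have hlc : IsLocallyConstant (fun x : X => δ x - δ' x) := by
    intro s
    exact isOpen_of_biStable _ fun x y h => by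
      simp only [Set.mem_preimage, hspec x y h]
  refine ⟨hlc, fun x y hy => ?_⟩
  exact hlc.apply_eq_of_isPreconnected isPreconnected_connectedComponent
    mem_connectedComponent hy
end

section
/- Let C be a triangulated category admitting arbitrary small coproducts, let t be a t-structure on C (written cohomologically, with full subcategories C^{≤n} and C^{≥n} and shift functor ⟦1⟧), and let G be a set of objects of C such that t is generated by G in the following sense: for every object L of C, L belongs to C^{≥1} if and only if Hom(K⟦n⟧, L) = 0 for every K ∈ G and every integer n ≥ 0. Then the following are equivalent: (i) G is a generating class of the triangulated category C, i.e. every object L with Hom(K⟦n⟧, L) = 0 for all K ∈ G and all n ∈ ℤ is a zero object; (ii) the t-structure t is left non-degenerate, i.e. every object L belonging to C^{≥m} for every integer m is a zero object. -/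
open CategoryTheory CategoryTheory.Limits CategoryTheory.Pretriangulated
  CategoryTheory.Triangulated

universe w v u

/-- Let `C` be a triangulated category admitting arbitrary small coproducts and let `t` be a
t-structure on `C` (cohomological convention) generated by a set `G` of objects, in the sense
that an object `L` lies in `C^{≥1}` iff `Hom(K⟦n⟧, L) = 0` for all `K ∈ G` and all `n ≥ 0`.
Then `G` is a generating class of the triangulated category `C` (every `L` with
`Hom(K⟦n⟧, L) = 0` for all `K ∈ G`, `n ∈ ℤ` is zero) if and only if `t` is left
non-degenerate (every object lying in `C^{≥m}` for all `m ∈ ℤ` is zero). -/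
theorem generated_tStructure_generating_iff_left_nondegenerate
    (C : Type u) [Category.{v} C] [Preadditive C] [HasZeroObject C] [HasShift C ℤ]
    [∀ n : ℤ, (shiftFunctor C n).Additive] [Pretriangulated C] [IsTriangulated C]
    [HasCoproducts.{w} C]
    (t : TStructure C) (G : Set C)
    (hgen : ∀ L : C, t.ge 1 L ↔ ∀ K ∈ G, ∀ n : ℤ, 0 ≤ n → ∀ f : K⟦n⟧ ⟶ L, f = 0) :
    (∀ L : C, (∀ K ∈ G, ∀ n : ℤ, ∀ f : K⟦n⟧ ⟶ L, f = 0) → IsZero L) ↔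
      ∀ L : C, (∀ m : ℤ, t.ge m L) → IsZero L := by
  constructor
  · intro hG L hL
    apply hG L
    intro K hK n f
    have hL' : t.ge 1 (L⟦-n⟧) := t.ge_shift (1 - n) (-n) 1 (by omega) L (hL _)
    have e : (K⟦(0 : ℤ)⟧ : C) ≅ K⟦n⟧⟦-n⟧ :=
      (shiftFunctorAdd' C n (-n) 0 (by omega)).app K
    have h0 := (hgen _).1 hL' K hK 0 le_rfl (e.hom ≫ (shiftFunctor C (-n)).map f)
    have hmap : (shiftFunctor C (-n)).map f = 0 := by
      rw [← cancel_epi e.hom, comp_zero, h0]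
    exact (shiftFunctor C (-n)).map_injective (by rw [hmap, Functor.map_zero])
  · intro hnd L hvan
    apply hnd L
    intro m
    rw [← t.shift_ge (m - 1) 1 m (by omega), ObjectProperty.prop_shift_iff]
    rw [hgen]
    intro K hK n hn f
    have e : (K⟦n + (1 - m)⟧ : C) ≅ K⟦n⟧⟦1 - m⟧ :=
      (shiftFunctorAdd' C n (1 - m) (n + (1 - m)) rfl).app K
    have u : (L⟦m - 1⟧⟦1 - m⟧ : C) ≅ L :=
      (shiftFunctorCompIsoId C (m - 1) (1 - m) (by omega)).app L
    have h0 := hvan K hK (n + (1 - m))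
      (e.hom ≫ (shiftFunctor C (1 - m)).map f ≫ u.hom)
    have hmap : (shiftFunctor C (1 - m)).map f = 0 := by
      rw [← cancel_epi e.hom, ← cancel_mono u.hom, comp_zero, zero_comp, Category.assoc, h0]
    exact (shiftFunctor C (1 - m)).map_injective (by rw [hmap, Functor.map_zero])
end
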